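/- Let K be a field, K_0 ⊆ K_1 ⊆ ... ⊆ K_n ⊆ K finite subfields with |K_i| = d_i, X = [K_0 × ... × K_n] ⊆ P^n(K), and P = (0 : 1 : a_2 : ... : a_n) ∈ X. Then f = t_1(t_1^{d_1 - 1} - t_0^{d_1 - 1}) Π_{i=2}^{n} Π_{λ ∈ K_i \ {a_i}} (t_i - λ t_1) is an indicator function for P of degree 1 + Σ_{i=1}^{n}(d_i - 1). -/

import Mathlib

open Finset MvPolynomial
open scoped LinearAlgebra.Projectivization

theorem stmt_12 (K : Type*) [Field K] [DecidableEq K] (n : ℕ) (hn : 1 ≤ n)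
    (A : Fin (n + 1) → Subfield K)
    (hnested : ∀ i j : Fin (n + 1), i ≤ j → A i ≤ A j)
    (hfin : ∀ i, (A i : Set K).Finite)
    (d : Fin (n + 1) → ℕ) (hd : ∀ i, Nat.card (A i) = d i)
    (a : Fin (n + 1) → K) (ha0 : a 0 = 0) (ha1 : a 1 = 1) (haA : ∀ i, a i ∈ A i)
    (hane : a ≠ 0) :
    (X 1 * (X 1 ^ (d 1 - 1) - X 0 ^ (d 1 - 1)) *
        ∏ i ∈ Ioi (1 : Fin (n + 1)), ∏ l ∈ (hfin i).toFinset.erase (a i),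
          (X i - C l * X 1) : MvPolynomial (Fin (n + 1)) K).IsHomogeneous
      (1 + ∑ i ∈ Ioi (0 : Fin (n + 1)), (d i - 1)) ∧
    eval a (X 1 * (X 1 ^ (d 1 - 1) - X 0 ^ (d 1 - 1)) *
        ∏ i ∈ Ioi (1 : Fin (n + 1)), ∏ l ∈ (hfin i).toFinset.erase (a i),
          (X i - C l * X 1) : MvPolynomial (Fin (n + 1)) K) ≠ 0 ∧
    ∀ (b : Fin (n + 1) → K) (hb : b ≠ 0), (∀ i, b i ∈ A i) →
      Projectivization.mk K b hb ≠ Projectivization.mk K a hane →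
      eval b (X 1 * (X 1 ^ (d 1 - 1) - X 0 ^ (d 1 - 1)) *
        ∏ i ∈ Ioi (1 : Fin (n + 1)), ∏ l ∈ (hfin i).toFinset.erase (a i),
          (X i - C l * X 1) : MvPolynomial (Fin (n + 1)) K) = 0 := by
  classical
  have hv1 : (1 : Fin (n + 1)).val = 1 := by simp [Fin.val_one']; omega
  -- cardinalities
  haveI : ∀ i, Fintype ↥(A i) := fun i => (hfin i).fintype
  have hcard : ∀ i, ((hfin i).toFinset.card) = d i := by
    intro i
    rw [Set.Finite.card_toFinset, ← Nat.card_eq_fintype_card]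
    exact hd i
  have herase : ∀ i, (((hfin i).toFinset.erase (a i)).card) = d i - 1 := by
    intro i
    rw [Finset.card_erase_of_mem (by simpa using haA i), hcard]
  have hd1 : 2 ≤ d 1 := by
    rw [← hd 1, Nat.card_eq_fintype_card]
    exact Fintype.one_lt_card
  -- pow lemma in A 1
  have hpow : ∀ x : K, x ∈ A 1 → x ≠ 0 → x ^ (d 1 - 1) = 1 := by
    intro x hx hx0
    have := FiniteField.pow_card_sub_one_eq_one (⟨x, hx⟩ : A 1)
      (by simpa [Subtype.ext_iff] using hx0)
    have hc : Fintype.card ↥(A 1) = d 1 := by rw [← Nat.card_eq_fintype_card]; exact hd 1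
    rw [hc] at this
    exact_mod_cast congrArg (Subfield.subtype (A 1)) this
  -- evaluation formula
  have heval : ∀ b : Fin (n + 1) → K,
      eval b (X 1 * (X 1 ^ (d 1 - 1) - X 0 ^ (d 1 - 1)) *
        ∏ i ∈ Ioi (1 : Fin (n + 1)), ∏ l ∈ (hfin i).toFinset.erase (a i),
          (X i - C l * X 1) : MvPolynomial (Fin (n + 1)) K)
      = b 1 * (b 1 ^ (d 1 - 1) - b 0 ^ (d 1 - 1)) *
        ∏ i ∈ Ioi (1 : Fin (n + 1)), ∏ l ∈ (hfin i).toFinset.erase (a i),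
          (b i - l * b 1) := by
    intro b
    simp [eval_prod]
  refine ⟨?_, ?_, ?_⟩
  · -- homogeneity
    have hioi : Ioi (0 : Fin (n + 1)) = insert 1 (Ioi (1 : Fin (n + 1))) := by
      ext x
      simp only [Finset.mem_Ioi, Finset.mem_insert, Fin.lt_def, Fin.ext_iff,
        Fin.val_zero, hv1]
      omega
    have hsum : (1 : ℕ) + ∑ i ∈ Ioi (0 : Fin (n + 1)), (d i - 1)
        = (1 + (d 1 - 1)) + ∑ i ∈ Ioi (1 : Fin (n + 1)),
            (((hfin i).toFinset.erase (a i)).card) := by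
      rw [hioi, Finset.sum_insert (by simp),
        show (∑ i ∈ Ioi (1 : Fin (n + 1)), (d i - 1))
            = ∑ i ∈ Ioi (1 : Fin (n + 1)), (((hfin i).toFinset.erase (a i)).card)
          from Finset.sum_congr rfl fun i _ => (herase i).symm,
        add_assoc]
    rw [hsum]
    refine MvPolynomial.IsHomogeneous.mul (MvPolynomial.IsHomogeneous.mul
      (isHomogeneous_X _ _) ?_) ?_
    · exact (by simpa using (isHomogeneous_X _ (1 : Fin (n+1))).pow (d 1 - 1) :
          (X 1 ^ (d 1 - 1) : MvPolynomial (Fin (n+1)) K).IsHomogeneous (d 1 - 1)).sub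
        (by simpa using (isHomogeneous_X _ (0 : Fin (n+1))).pow (d 1 - 1))
    · refine MvPolynomial.IsHomogeneous.prod _ _ _ fun i _ => ?_
      have : (((hfin i).toFinset.erase (a i)).card) =
          ∑ _l ∈ (hfin i).toFinset.erase (a i), 1 := by simp
      rw [this]
      refine MvPolynomial.IsHomogeneous.prod _ _ _ fun l _ => ?_
      have h1 : ((C l * X 1 : MvPolynomial (Fin (n + 1)) K)).IsHomogeneous 1 := by
        simpa using (isHomogeneous_C _ l).mul (isHomogeneous_X _ (1 : Fin (n+1)))
      exact (isHomogeneous_X _ _).sub h1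
  · -- evaluation at a nonzero
    rw [heval]
    have h0 : a 0 ^ (d 1 - 1) = 0 := by
      rw [ha0]
      exact zero_pow (by omega)
    rw [ha1, h0, one_pow]
    simp only [one_mul, mul_one, sub_zero]
    rw [Finset.prod_ne_zero_iff]
    intro i _
    rw [Finset.prod_ne_zero_iff]
    intro l hl
    have : l ≠ a i := (Finset.ne_of_mem_erase hl)
    intro h
    apply this
    have : l = a i := by linear_combination -h
    exact this
  · -- vanishing at other points
    intro b hb hbA hne
    rw [heval]
    by_cases hb1 : b 1 = 0
    · rw [hb1]; ring
    by_cases hb0 : b 0 = 0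
    · -- must differ at some coordinate i > 1
      refine mul_eq_zero_of_right _ ?_
      by_contra hcon
      replace hcon := Finset.prod_ne_zero_iff.mp hcon
      apply hne
      rw [Projectivization.mk_eq_mk_iff]
      refine ⟨Units.mk0 (b 1) hb1, funext fun i => ?_⟩
      have hvals : i = 0 ∨ i = 1 ∨ (1 : Fin (n+1)) < i := by
        rcases lt_trichotomy i 1 with h | h | h
        · left
          have h2 := Fin.lt_def.mp h
          rw [hv1] at h2
          apply Fin.ext
          simp only [Fin.val_zero]
          omega
        · right; left; exact h
        · right; right; exact h
      rcases hvals with rfl | rfl | hi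
      · simp [ha0, hb0]
      · simp [ha1, hb1]
      · have hcon' := hcon i (Finset.mem_Ioi.mpr hi)
        replace hcon' := Finset.prod_ne_zero_iff.mp hcon'
        -- show b i = b 1 * a i; otherwise l = b i / b 1 is in erase set giving zero
        by_contra hne2
        have hl : b i * (b 1)⁻¹ ∈ (hfin i).toFinset.erase (a i) := by
          refine Finset.mem_erase.mpr ⟨?_, ?_⟩
          · intro h
            apply hne2
            have hx : b 1 * a i = b i := by
              rw [← h]; field_simp
            simpa [Units.smul_def, smul_eq_mul] using hx
          · have h1i : (1 : Fin (n+1)) ≤ i := le_of_lt hi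
            have : b i * (b 1)⁻¹ ∈ A i :=
              (A i).mul_mem (hbA i) ((A i).inv_mem (hnested 1 i h1i (hbA 1)))
            simpa using this
        have := hcon' _ hl
        apply this
        field_simp
        ring
    · -- b 0 ≠ 0 and b 1 ≠ 0 : middle factor vanishes
      have h1 : b 1 ^ (d 1 - 1) = 1 := hpow _ (hbA 1) hb1
      have h0 : b 0 ^ (d 1 - 1) = 1 :=
        hpow _ (hnested 0 1 (by simp [Fin.le_def, hv1]) (hbA 0)) hb0
      rw [h1, h0]
      ring
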